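/- Let n ≥ 4 and d = n+3. The couple (Σ_{2,n,2},(0,n−2,3)) is non-realizable: no hyperbolic polynomial of degree d realizes it. -/

import Mathlib

open Polynomial Finset

/-- A real polynomial `P` of degree `d` defines the sign pattern `Σ_{m,n,q}`:
reading the coefficients from that of `x^d` down to the constant term, the first
`m` are positive, the next `n` are negative and the last `q` are positive
(in particular all `d+1` coefficients are nonzero), where `m + n + q = d + 1`. -/
def SignPatternMNQ (P : Polynomial ℝ) (d m n q : ℕ) : Prop :=
  m + n + q = d + 1 ∧ 0 < m ∧ 0 < n ∧ 0 < q ∧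
  (∀ k, k ≤ d → (d - k < m ∨ m + n ≤ d - k) → 0 < P.coeff k) ∧
  (∀ k, k ≤ d → (m ≤ d - k ∧ d - k < m + n) → P.coeff k < 0)

/-- The couple `(Σ_{m,n,q}, (u,v,w))` is realizable (in degree `d`): there is a
hyperbolic polynomial `P` of degree `d` defining the sign pattern `Σ_{m,n,q}`,
whose roots are exactly two positive numbers `β < α` together with `d - 2`
negative numbers `-γ i`, all moduli being distinct, such that exactly `u` of
the `γ i` are `< β`, exactly `v` lie in `(β, α)` and exactly `w` are `> α`. -/
def RealizesCouple (d m n q u v w : ℕ) : Prop :=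
  ∃ (P : Polynomial ℝ) (α β : ℝ) (γ : Fin (d - 2) → ℝ),
    P.natDegree = d ∧
    SignPatternMNQ P d m n q ∧
    0 < β ∧ β < α ∧
    StrictMono γ ∧ (∀ i, 0 < γ i) ∧ (∀ i, γ i ≠ β ∧ γ i ≠ α) ∧
    P.roots = (α ::ₘ β ::ₘ Multiset.map (fun i => -γ i) Finset.univ.val) ∧
    (Finset.univ.filter (fun i => γ i < β)).card = u ∧
    (Finset.univ.filter (fun i => β < γ i ∧ γ i < α)).card = v ∧
    (Finset.univ.filter (fun i => α < γ i)).card = w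

lemma esymm_two_cons (a : ℝ) (s : Multiset ℝ) :
    (a ::ₘ s).esymm 2 = s.esymm 2 + a * s.sum := by
  show ((Multiset.powersetCard 2 (a ::ₘ s)).map Multiset.prod).sum = _
  rw [show (2:ℕ) = 1 + 1 from rfl, Multiset.powersetCard_cons, Multiset.map_add,
    Multiset.sum_add, Multiset.map_map, Multiset.powersetCard_one, Multiset.map_map]
  congr 1
  have h1 : ((Multiset.prod ∘ Multiset.cons a) ∘ (singleton : ℝ → Multiset ℝ))
      = fun x : ℝ => a * id x := by funext x; simp
  rw [h1, Multiset.sum_map_mul_left, Multiset.map_id]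

lemma sq_sum_multiset (s : Multiset ℝ) :
    s.sum ^ 2 = (s.map (fun x => x ^ 2)).sum + 2 * s.esymm 2 := by
  induction s using Multiset.induction_on with
  | empty => simp [Multiset.esymm, Multiset.powersetCard_zero_right 1]
  | cons a s ih =>
    rw [Multiset.sum_cons, esymm_two_cons, Multiset.map_cons, Multiset.sum_cons]
    ring_nf
    ring_nf at ih
    linarith [ih]

set_option maxHeartbeats 1000000 in
/-- Proposition 3 (2): for `n ≥ 4` and `d = n + 3`, the couple
`(Σ_{2,n,2}, (0, n-2, 3))` is non-realizable. -/
theorem stmt6 (n : ℕ) (hn : 4 ≤ n) :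
    ¬ RealizesCouple (n + 3) 2 n 2 0 (n - 2) 3 := by
  rintro ⟨P, α, β, γ, hdeg, hsp, hβ, hβα, hmono, hγpos, hne, hroots, hu, hv, hw⟩
  have hα : 0 < α := hβ.trans hβα
  -- all γ i > β
  have hβγ : ∀ i, β < γ i := by
    intro i
    have h0 : (Finset.univ.filter (fun i => γ i < β)) = ∅ := Finset.card_eq_zero.mp hu
    have : ¬ γ i < β := by
      intro h
      have : i ∈ Finset.univ.filter (fun i => γ i < β) := by simp [h]
      rw [h0] at this; exact absurd this (Finset.notMem_empty i)
    exact lt_of_le_of_ne (not_lt.mp this) (Ne.symm (hne i).1)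
  -- the top index
  have hN : n + 3 - 2 = n + 1 := rfl
  have hn0 : n < n + 3 - 2 := by omega
  set i₀ : Fin (n + 3 - 2) := ⟨n, hn0⟩ with hi₀
  have hmax : ∀ i, γ i ≤ γ i₀ := by
    intro i
    refine hmono.monotone ?_
    rw [Fin.le_def]
    have := i.isLt
    simp only [hi₀]
    omega
  set A : Finset (Fin (n + 3 - 2)) := Finset.univ.filter (fun i => α < γ i) with hA
  have hAcard : A.card = 3 := hw
  have hi₀A : i₀ ∈ A := by
    have : A.Nonempty := Finset.card_pos.mp (by omega)
    obtain ⟨j, hj⟩ := this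
    have hj' : α < γ j := (Finset.mem_filter.mp hj).2
    exact Finset.mem_filter.mpr ⟨Finset.mem_univ _, lt_of_lt_of_le hj' (hmax j)⟩
  set A' : Finset (Fin (n + 3 - 2)) := A.erase i₀ with hA'
  have hA'card : A'.card = 2 := by rw [hA', Finset.card_erase_of_mem hi₀A, hAcard]
  have hA'sub : A' ⊆ Finset.univ.erase i₀ :=
    fun x hx => Finset.mem_erase.mpr ⟨(Finset.mem_erase.mp hx).1, Finset.mem_univ x⟩
  set S : ℝ := ∑ i, γ i with hS
  have hSpos : 0 < S := Finset.sum_pos (fun i _ => hγpos i) ⟨i₀, Finset.mem_univ _⟩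
  have hsplitS : γ i₀ + ∑ i ∈ Finset.univ.erase i₀, γ i = S :=
    Finset.add_sum_erase _ _ (Finset.mem_univ i₀)
  -- sum over erase i₀ exceeds 2α + 2β
  have herasecard : (Finset.univ.erase i₀).card = n := by
    rw [Finset.card_erase_of_mem (Finset.mem_univ _), Finset.card_univ, Fintype.card_fin]
    omega
  have hBcard : ((Finset.univ.erase i₀) \ A').card = n - 2 := by
    rw [Finset.card_sdiff_of_subset hA'sub, herasecard, hA'card]
  have hsumA' : 2 * α < ∑ i ∈ A', γ i := by
    have hne' : A'.Nonempty := Finset.card_pos.mp (by omega)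
    have := Finset.sum_lt_sum_of_nonempty hne'
      (f := fun _ => α) (g := γ) (fun i hi => (Finset.mem_filter.mp (Finset.mem_of_mem_erase hi)).2)
    rw [Finset.sum_const, hA'card] at this
    calc 2 * α = (2 : ℕ) • α := by simp [nsmul_eq_mul]
    _ < _ := this
  have hsumB : 2 * β < ∑ i ∈ (Finset.univ.erase i₀) \ A', γ i := by
    have hne' : ((Finset.univ.erase i₀) \ A').Nonempty := Finset.card_pos.mp (by omega)
    have h1 := Finset.sum_lt_sum_of_nonempty hne'
      (f := fun _ => β) (g := γ) (fun i _ => hβγ i)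
    rw [Finset.sum_const, hBcard] at h1
    have h2 : 2 * β ≤ (n - 2 : ℕ) • β := by
      rw [nsmul_eq_mul]
      have h3 : ((2:ℕ):ℝ) ≤ ((n - 2 : ℕ):ℝ) := Nat.cast_le.mpr (by omega)
      have h4 := mul_le_mul_of_nonneg_right h3 hβ.le
      push_cast at h4
      linarith
    linarith
  have hgap : 2 * α + 2 * β < ∑ i ∈ Finset.univ.erase i₀, γ i := by
    have := Finset.sum_sdiff hA'sub (f := γ)
    linarith
  -- sum of squares bound
  set Q : ℝ := ∑ i, (γ i) ^ 2 with hQdef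
  have hQ : Q ≤ γ i₀ * S := by
    rw [hS, Finset.mul_sum]
    refine Finset.sum_le_sum (fun i _ => ?_)
    have h1 : γ i ≤ γ i₀ := hmax i
    have h2 : 0 < γ i := hγpos i
    nlinarith
  -- Vieta
  have hcard : Multiset.card P.roots = P.natDegree := by
    rw [hroots, hdeg, Multiset.card_cons, Multiset.card_cons, Multiset.card_map]
    have : Multiset.card (Finset.univ.val : Multiset (Fin (n + 3 - 2))) = n + 3 - 2 := by
      rw [← Finset.card_def, Finset.card_univ, Fintype.card_fin]
    omega
  have hk : n + 1 ≤ P.natDegree := by omega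
  have hvieta := Polynomial.coeff_eq_esymm_roots_of_card hcard hk
  have hsub : P.natDegree - (n + 1) = 2 := by omega
  rw [hsub] at hvieta
  have hlc : 0 < P.leadingCoeff := by
    have := hsp.2.2.2.2.1 (n + 3) (by omega) (by left; omega)
    rwa [Polynomial.leadingCoeff, hdeg]
  have hcoeffneg : P.coeff (n + 1) < 0 :=
    hsp.2.2.2.2.2 (n + 1) (by omega) (by constructor <;> omega)
  have hesymmneg : P.roots.esymm 2 < 0 := by
    rw [hvieta] at hcoeffneg
    nlinarith
  -- compute sum and sum of squares of roots
  have hmsum : P.roots.sum = α + β - S := by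
    rw [hroots, Multiset.sum_cons, Multiset.sum_cons]
    have : (Multiset.map (fun i => -γ i) Finset.univ.val).sum = ∑ i, (-γ i) := rfl
    rw [this, Finset.sum_neg_distrib]
    ring_nf
    rw [hS]
  have hmsq : (P.roots.map (fun x => x ^ 2)).sum = α ^ 2 + β ^ 2 + Q := by
    rw [hroots, Multiset.map_cons, Multiset.map_cons, Multiset.sum_cons, Multiset.sum_cons,
      Multiset.map_map]
    have : ((Finset.univ.val.map ((fun x : ℝ => x ^ 2) ∘ fun i => -γ i))).sum
        = ∑ i, (γ i) ^ 2 := by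
      apply congrArg Multiset.sum
      apply Multiset.map_congr rfl
      intro x _
      simp [neg_pow]
    rw [this, ← hQdef]
    ring
  have hident := sq_sum_multiset P.roots
  rw [hmsum, hmsq] at hident
  -- final contradiction
  have hfin : 0 < S * (S - γ i₀ - 2 * α - 2 * β) := by
    apply mul_pos hSpos
    linarith
  nlinarith [hident, hesymmneg, mul_pos hα hβ, hfin, hQ]
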